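/- Let M > 0, H < 0, and L > 4√2·√(−H)·M. Set r₀ = (L² + L√(L² + 24HM²))/(−4HM) and ω₀(H, L) = −W(r₀; H, L), where W(r; H, L) = ½(L²/r² − 2H)(1 − 2M/r). Then ω₀(H, L) = H·ζ(L/(√(−H)·M)), where ζ(u) = (u⁴ − 20u² + 32 + u(u² − 8)√(u² − 24)) / (u⁴ − 18u² + u(u² − 6)√(u² − 24)). -/

import Mathlib

open Real

/-- Homogeneity identity: ω₀(H, L) = H ζ(L/(√(−H) M)), where ω₀ is the opposite of
the minimum value of the Schwarzschild effective potential. -/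
theorem schwarzschild_omega0_homogeneity
    (M H L : ℝ) (hM : 0 < M) (hH : H < 0)
    (hL : 4 * Real.sqrt 2 * Real.sqrt (-H) * M < L) :
    -((1 / 2) * (L ^ 2 / ((L ^ 2 + L * Real.sqrt (L ^ 2 + 24 * H * M ^ 2)) / (-4 * H * M)) ^ 2
          - 2 * H) *
        (1 - 2 * M / ((L ^ 2 + L * Real.sqrt (L ^ 2 + 24 * H * M ^ 2)) / (-4 * H * M)))) =
    H * ((fun u : ℝ =>
        (u ^ 4 - 20 * u ^ 2 + 32 + u * (u ^ 2 - 8) * Real.sqrt (u ^ 2 - 24)) /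
          (u ^ 4 - 18 * u ^ 2 + u * (u ^ 2 - 6) * Real.sqrt (u ^ 2 - 24)))
      (L / (Real.sqrt (-H) * M))) := by
  have h2 : (0:ℝ) < Real.sqrt 2 := Real.sqrt_pos.mpr (by norm_num)
  set a := Real.sqrt (-H) with ha_def
  have ha : 0 < a := Real.sqrt_pos.mpr (by linarith)
  have haH : a ^ 2 = -H := Real.sq_sqrt (by linarith)
  set u := L / (a * M) with hu_def
  have hL0 : 0 < L := lt_trans (by positivity) hL
  have hu : 4 * Real.sqrt 2 < u := by
    rw [hu_def, lt_div_iff₀ (by positivity)]; linarith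
  have hu0 : 0 < u := lt_trans (by positivity) hu
  have hLu : L = u * (a * M) := by rw [hu_def, div_mul_cancel₀ _ (by positivity)]
  have h2sq : (Real.sqrt 2) ^ 2 = 2 := Real.sq_sqrt (by norm_num)
  have hu2 : 32 < u ^ 2 := by nlinarith
  set t := Real.sqrt (u ^ 2 - 24) with ht_def
  have ht0 : 0 < t := Real.sqrt_pos.mpr (by nlinarith)
  have ht : t ^ 2 = u ^ 2 - 24 := Real.sq_sqrt (by nlinarith)
  have hH2 : H = -a ^ 2 := by linarith
  clear_value a u t
  have hs : Real.sqrt (L ^ 2 + 24 * H * M ^ 2) = a * M * t := by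
    have : L ^ 2 + 24 * H * M ^ 2 = (a * M * t) ^ 2 := by
      rw [hLu]; linear_combination (-(a^2*M^2)) * ht + (24*M^2) * haH
    rw [this, Real.sqrt_sq (by positivity)]
  have hD : 0 < u ^ 4 - 18 * u ^ 2 + u * (u ^ 2 - 6) * t := by
    have h1 : 0 < u ^ 2 * (u ^ 2 - 18) := by nlinarith
    have h2' : 0 < u * (u ^ 2 - 6) * t := by
      apply mul_pos (mul_pos hu0 (by nlinarith)) ht0
    nlinarith
  rw [hs, hH2, hLu]
  simp only []
  have hut : 0 < u + t := by linarith
  rw [← ht_def]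
  have hD' : u * (u ^ 2 - 18) + t * (u ^ 2 - 6) ≠ 0 := by nlinarith
  field_simp
  linear_combination (-4*u*t^2 - 32*t + 4*u^3 - 96*u) * ht
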